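/- Under parallel trends (PT), for every j ∈ {1, …, J}, the difference in observed outcome paths between adjacent dose groups equals the average causal response on the treated plus a selection-bias term: E[ΔY | D = d_j] − E[ΔY | D = d_{j−1}] = ACRT(d_j|d_j) + (ATT(d_{j−1}|d_j) − ATT(d_{j−1}|d_{j−1})). -/

import Mathlib

open MeasureTheory

/-- Conditional expectation of `X` given the event `A`: `E[X | A] = E[X·1_A] / P(A)`. -/
noncomputable def cExp {Ω : Type*} [MeasurableSpace Ω] (P : Measure Ω)
    (X : Ω → ℝ) (A : Set Ω) : ℝ :=
  (∫ ω in A, X ω ∂P) / (P A).toReal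

/-- Splitting lemma: `E[f − h | A] = E[f − g | A] + E[g − h | A]`. -/
lemma cExp_sub_split {Ω : Type*} [MeasurableSpace Ω] (P : Measure Ω)
    (f g h : Ω → ℝ) (hf : Integrable f P) (hg : Integrable g P) (hh : Integrable h P)
    (A : Set Ω) :
    cExp P (fun ω => f ω - h ω) A =
      cExp P (fun ω => f ω - g ω) A + cExp P (fun ω => g ω - h ω) A := by
  unfold cExp
  rw [← add_div]
  congr 1
  have h1 : IntegrableOn (fun ω => f ω - g ω) A P := (hf.sub hg).integrableOn
  have h2 : IntegrableOn (fun ω => g ω - h ω) A P := (hg.sub hh).integrableOn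
  rw [← integral_add h1 h2]
  apply integral_congr_ae
  filter_upwards with ω
  ring

theorem acrt_plus_selection_bias_under_parallel_trends
    {Ω : Type*} [MeasurableSpace Ω] (P : Measure Ω) [IsProbabilityMeasure P]
    (J : ℕ) (d : ℕ → ℝ) (hd0 : d 0 = 0)
    (hmono : ∀ i j : ℕ, i < j → j ≤ J → d i < d j)
    (D : Ω → ℝ) (hD : Measurable D)
    (hDval : ∀ ω, ∃ j ≤ J, D ω = d j)
    (hp : ∀ j ≤ J, 0 < P {ω | D ω = d j})
    (Y0 : Ω → ℝ) (hY0m : Measurable Y0) (hY0i : Integrable Y0 P)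
    (Y1 : ℝ → Ω → ℝ)
    (hY1m : ∀ j ≤ J, Measurable (Y1 (d j)))
    (hY1i : ∀ j ≤ J, Integrable (Y1 (d j)) P)
    (hPT : ∀ j ≤ J,
      cExp P (fun ω => Y1 (d 0) ω - Y0 ω) {ω | D ω = d j} =
        cExp P (fun ω => Y1 (d 0) ω - Y0 ω) {ω | D ω = d 0}) :
    ∀ j : ℕ, 1 ≤ j → j ≤ J →
      cExp P (fun ω => Y1 (D ω) ω - Y0 ω) {ω | D ω = d j} -
        cExp P (fun ω => Y1 (D ω) ω - Y0 ω) {ω | D ω = d (j - 1)} =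
      cExp P (fun ω => Y1 (d j) ω - Y1 (d (j - 1)) ω) {ω | D ω = d j} +
        (cExp P (fun ω => Y1 (d (j - 1)) ω - Y1 (d 0) ω) {ω | D ω = d j} -
          cExp P (fun ω => Y1 (d (j - 1)) ω - Y1 (d 0) ω) {ω | D ω = d (j - 1)}) := by
  intro j hj1 hjJ
  have hj1J : j - 1 ≤ J := le_trans (Nat.sub_le j 1) hjJ
  set A := {ω | D ω = d j} with hA
  set B := {ω | D ω = d (j - 1)} with hB
  have hAm : MeasurableSet A := hD (measurableSet_singleton (d j))
  have hBm : MeasurableSet B := hD (measurableSet_singleton (d (j - 1)))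
  -- rewrite Y1 (D ω) on each set
  have hcongA : cExp P (fun ω => Y1 (D ω) ω - Y0 ω) A =
      cExp P (fun ω => Y1 (d j) ω - Y0 ω) A := by
    unfold cExp
    congr 1
    apply setIntegral_congr_fun hAm
    intro ω hω
    simp only [hA, Set.mem_setOf_eq] at hω
    show Y1 (D ω) ω - Y0 ω = Y1 (d j) ω - Y0 ω
    rw [hω]
  have hcongB : cExp P (fun ω => Y1 (D ω) ω - Y0 ω) B =
      cExp P (fun ω => Y1 (d (j - 1)) ω - Y0 ω) B := by
    unfold cExp
    congr 1
    apply setIntegral_congr_fun hBm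
    intro ω hω
    simp only [hB, Set.mem_setOf_eq] at hω
    show Y1 (D ω) ω - Y0 ω = Y1 (d (j - 1)) ω - Y0 ω
    rw [hω]
  have i0 := hY1i 0 (Nat.zero_le J)
  have ij := hY1i j hjJ
  have ij1 := hY1i (j - 1) hj1J
  have splitA : cExp P (fun ω => Y1 (d j) ω - Y0 ω) A =
      cExp P (fun ω => Y1 (d j) ω - Y1 (d (j - 1)) ω) A +
        cExp P (fun ω => Y1 (d (j - 1)) ω - Y0 ω) A :=
    cExp_sub_split P _ _ _ ij ij1 hY0i A
  have splitA2 : cExp P (fun ω => Y1 (d (j - 1)) ω - Y0 ω) A =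
      cExp P (fun ω => Y1 (d (j - 1)) ω - Y1 (d 0) ω) A +
        cExp P (fun ω => Y1 (d 0) ω - Y0 ω) A :=
    cExp_sub_split P _ _ _ ij1 i0 hY0i A
  have splitB : cExp P (fun ω => Y1 (d (j - 1)) ω - Y0 ω) B =
      cExp P (fun ω => Y1 (d (j - 1)) ω - Y1 (d 0) ω) B +
        cExp P (fun ω => Y1 (d 0) ω - Y0 ω) B :=
    cExp_sub_split P _ _ _ ij1 i0 hY0i B
  have hPTeq : cExp P (fun ω => Y1 (d 0) ω - Y0 ω) A =
      cExp P (fun ω => Y1 (d 0) ω - Y0 ω) B := by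
    rw [hPT j hjJ, hPT (j - 1) hj1J]
  rw [hcongA, hcongB, splitA, splitA2, splitB, hPTeq]
  ring
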